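/- Let (M,W,P) be an ordinal marriage market with strict preferences. Then there exists a cardinal representation (U, V) of the preference profile P such that every isolated stable matching μ ∈ S(P) is no-trade stable for (U, V): for all men i and women j, U(i,j) + V(i,j) ≤ U(i,μ(i)) + V(μ⁻¹(j), j). -/

import Mathlib

set_option maxHeartbeats 1600000

/-- NTU stability of a matching in an ordinal market with strict preferences. -/
def OrdStable (n : ℕ) (Pm Pw : Fin n → Fin n → ℝ) (σ : Equiv.Perm (Fin n)) : Prop :=
  ¬ ∃ i j : Fin n, Pm i (σ i) < Pm i j ∧ Pw j (σ⁻¹ j) < Pw j i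

/-- A stable matching is isolated if every other stable matching gives every agent
a different partner. -/
def Isolated (n : ℕ) (Pm Pw : Fin n → Fin n → ℝ) (μ : Equiv.Perm (Fin n)) : Prop :=
  ∀ μ' : Equiv.Perm (Fin n), OrdStable n Pm Pw μ' → μ' ≠ μ →
    (∀ i, μ' i ≠ μ i) ∧ (∀ j, μ'⁻¹ j ≠ μ⁻¹ j)

theorem Equiv.Perm.apply_inv_self {α : Type*} (f : Equiv.Perm α) (x : α) : f (f⁻¹ x) = x :=
  Equiv.apply_symm_apply f x

theorem Equiv.Perm.inv_apply_self {α : Type*} (f : Equiv.Perm α) (x : α) : f⁻¹ (f x) = x :=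
  Equiv.symm_apply_apply f x

namespace Stmt16Aux

variable {n : ℕ} {Pm Pw : Fin n → Fin n → ℝ}

/-- Isolated stable matchings. -/
def Good (n : ℕ) (Pm Pw : Fin n → Fin n → ℝ) (μ : Equiv.Perm (Fin n)) : Prop :=
  OrdStable n Pm Pw μ ∧ Isolated n Pm Pw μ

/-- Opposition of interests: if all men strictly prefer `μ` to the stable `ν`,
then all women strictly prefer `ν` to `μ`. -/
lemma womenOpp {μ ν : Equiv.Perm (Fin n)} (hν : OrdStable n Pm Pw ν)
    (hPw : ∀ j, Function.Injective (Pw j))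
    (hmen : ∀ i, Pm i (ν i) < Pm i (μ i))
    (hd : ∀ j, ν⁻¹ j ≠ μ⁻¹ j) :
    ∀ j, Pw j (μ⁻¹ j) < Pw j (ν⁻¹ j) := by
  intro j
  by_contra hle
  have h1 : Pw j (ν⁻¹ j) ≤ Pw j (μ⁻¹ j) := le_of_not_gt hle
  have h2 : Pw j (ν⁻¹ j) ≠ Pw j (μ⁻¹ j) := fun he => hd j (hPw j he)
  have h3 : Pw j (ν⁻¹ j) < Pw j (μ⁻¹ j) := lt_of_le_of_ne h1 h2
  have h4 : Pm (μ⁻¹ j) (ν (μ⁻¹ j)) < Pm (μ⁻¹ j) j := by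
    have := hmen (μ⁻¹ j)
    rwa [Equiv.Perm.apply_inv_self] at this
  exact hν ⟨μ⁻¹ j, j, h4, h3⟩

/-- Any stable matching is pointwise comparable with an isolated stable matching. -/
lemma chain (hPm : ∀ i, Function.Injective (Pm i))
    (hPw : ∀ j, Function.Injective (Pw j))
    {μ μ' : Equiv.Perm (Fin n)}
    (hμ : OrdStable n Pm Pw μ) (hiso : Isolated n Pm Pw μ)
    (hμ' : OrdStable n Pm Pw μ') (hne : μ' ≠ μ) :
    (∀ i, Pm i (μ' i) < Pm i (μ i)) ∨ (∀ i, Pm i (μ i) < Pm i (μ' i)) := by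
  have hdiff : ∀ i, μ' i ≠ μ i := (hiso μ' hμ' hne).1
  by_contra hcon
  push_neg at hcon
  obtain ⟨⟨i1, hi1⟩, ⟨i2, hi2⟩⟩ := hcon
  have h1 : Pm i1 (μ i1) < Pm i1 (μ' i1) :=
    lt_of_le_of_ne hi1 (fun he => hdiff i1 (hPm i1 he.symm))
  have h2 : Pm i2 (μ' i2) < Pm i2 (μ i2) :=
    lt_of_le_of_ne hi2 (fun he => hdiff i2 (hPm i2 he))
  set g : Fin n → Fin n := fun i => if Pm i (μ i) < Pm i (μ' i) then μ' i else μ i with hg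
  have hgmax1 : ∀ i, Pm i (μ i) ≤ Pm i (g i) := by
    intro i; simp only [hg]
    split_ifs with h
    · exact le_of_lt h
    · exact le_rfl
  have hgmax2 : ∀ i, Pm i (μ' i) ≤ Pm i (g i) := by
    intro i; simp only [hg]
    split_ifs with h
    · exact le_rfl
    · exact le_of_not_gt h
  have hstrict : ∀ i, ¬ Pm i (μ i) < Pm i (μ' i) → Pm i (μ' i) < Pm i (μ i) := by
    intro i h
    exact lt_of_le_of_ne (le_of_not_gt h) (fun he => hdiff i (hPm i he))
  have hginj : Function.Injective g := by
    intro x y hxy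
    by_contra hxyne
    simp only [hg] at hxy
    by_cases hx : Pm x (μ x) < Pm x (μ' x) <;> by_cases hy : Pm y (μ y) < Pm y (μ' y)
    · rw [if_pos hx, if_pos hy] at hxy; exact hxyne (μ'.injective hxy)
    · rw [if_pos hx, if_neg hy] at hxy
      -- μ' x = μ y =: w
      have hPwne : Pw (μ' x) x ≠ Pw (μ' x) y := fun he => hxyne (hPw _ he)
      have hinv1 : μ'⁻¹ (μ' x) = x := Equiv.Perm.inv_apply_self μ' x
      have hinv2 : μ⁻¹ (μ' x) = y := by rw [hxy, Equiv.Perm.inv_apply_self]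
      rcases lt_or_gt_of_ne hPwne with hlt | hgt
      · -- (y, w) blocks μ'
        refine hμ' ⟨y, μ' x, ?_, ?_⟩
        · rw [hxy]; exact hstrict y hy
        · rw [hinv1]; exact hlt
      · -- (x, w) blocks μ
        refine hμ ⟨x, μ' x, hx, ?_⟩
        rw [hinv2]; exact hgt
    · rw [if_neg hx, if_pos hy] at hxy
      -- μ x = μ' y =: w
      have hPwne : Pw (μ x) x ≠ Pw (μ x) y := fun he => hxyne (hPw _ he)
      have hinv1 : μ⁻¹ (μ x) = x := Equiv.Perm.inv_apply_self μ x
      have hinv2 : μ'⁻¹ (μ x) = y := by rw [hxy, Equiv.Perm.inv_apply_self]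
      rcases lt_or_gt_of_ne hPwne with hlt | hgt
      · -- (y, w) blocks μ
        refine hμ ⟨y, μ x, ?_, ?_⟩
        · rw [hxy]; exact hy
        · rw [hinv1]; exact hlt
      · -- (x, w) blocks μ'
        refine hμ' ⟨x, μ x, ?_, ?_⟩
        · exact hstrict x hx
        · rw [hinv2]; exact hgt
    · rw [if_neg hx, if_neg hy] at hxy; exact hxyne (μ.injective hxy)
  have hbij : Function.Bijective g := Finite.injective_iff_bijective.1 hginj
  set ν : Equiv.Perm (Fin n) := Equiv.ofBijective g hbij with hν
  have hνapp : ∀ i, ν i = g i := fun i => rfl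
  have hνstable : OrdStable n Pm Pw ν := by
    rintro ⟨i, j, hb1, hb2⟩
    have hgx : g (ν⁻¹ j) = j := by
      have := Equiv.Perm.apply_inv_self ν j
      rwa [hνapp] at this
    rw [hνapp] at hb1
    by_cases hxc : Pm (ν⁻¹ j) (μ (ν⁻¹ j)) < Pm (ν⁻¹ j) (μ' (ν⁻¹ j))
    · have hj : μ' (ν⁻¹ j) = j := by
        have hh : g (ν⁻¹ j) = μ' (ν⁻¹ j) := by simp only [hg]; rw [if_pos hxc]
        rw [← hh]; exact hgx
      have hinv : μ'⁻¹ j = ν⁻¹ j := by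
        rw [Equiv.Perm.inv_def, Equiv.symm_apply_eq]; exact hj.symm
      exact hμ' ⟨i, j, lt_of_le_of_lt (hgmax2 i) hb1, by rw [hinv]; exact hb2⟩
    · have hj : μ (ν⁻¹ j) = j := by
        have hh : g (ν⁻¹ j) = μ (ν⁻¹ j) := by simp only [hg]; rw [if_neg hxc]
        rw [← hh]; exact hgx
      have hinv : μ⁻¹ j = ν⁻¹ j := by
        rw [Equiv.Perm.inv_def, Equiv.symm_apply_eq]; exact hj.symm
      exact hμ ⟨i, j, lt_of_le_of_lt (hgmax1 i) hb1, by rw [hinv]; exact hb2⟩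
  have hν1 : ν i1 = μ' i1 := by rw [hνapp]; simp only [hg]; rw [if_pos h1]
  have hν2 : ν i2 = μ i2 := by
    rw [hνapp]; simp only [hg]; rw [if_neg (not_lt.2 (le_of_lt h2))]
  have hνne : ν ≠ μ := by
    intro he
    exact hdiff i1 (by rw [← hν1, he])
  exact (hiso ν hνstable hνne).1 i2 hν2

open Classical in
/-- Count of isolated stable matchings giving man `i` a partner weakly below `j`. -/
noncomputable def aN (n : ℕ) (Pm Pw : Fin n → Fin n → ℝ) (i j : Fin n) : ℕ :=
  ∑ μ' : Equiv.Perm (Fin n), if Good n Pm Pw μ' ∧ Pm i (μ' i) ≤ Pm i j then 1 else 0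

open Classical in
/-- Count of isolated stable matchings giving woman `j` a partner weakly below `i`. -/
noncomputable def bN (n : ℕ) (Pm Pw : Fin n → Fin n → ℝ) (i j : Fin n) : ℕ :=
  ∑ μ' : Equiv.Perm (Fin n), if Good n Pm Pw μ' ∧ Pw j (μ'⁻¹ j) ≤ Pw j i then 1 else 0

open Classical in
noncomputable def kN (n : ℕ) (Pm Pw : Fin n → Fin n → ℝ) : ℕ :=
  ∑ μ' : Equiv.Perm (Fin n), if Good n Pm Pw μ' then 1 else 0

noncomputable def rM (n : ℕ) (Pm : Fin n → Fin n → ℝ) (i j : Fin n) : ℕ :=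
  ∑ j'' : Fin n, if Pm i j'' < Pm i j then 1 else 0

noncomputable def rW (n : ℕ) (Pw : Fin n → Fin n → ℝ) (j i : Fin n) : ℕ :=
  ∑ i'' : Fin n, if Pw j i'' < Pw j i then 1 else 0

open Classical in
noncomputable def hM (n : ℕ) (Pm Pw : Fin n → Fin n → ℝ) (i j : Fin n) : ℝ :=
  if ∃ μ', Good n Pm Pw μ' ∧ μ' i = j then 0 else (1 + rM n Pm i j) / (n + 2)

open Classical in
noncomputable def hW (n : ℕ) (Pm Pw : Fin n → Fin n → ℝ) (j i : Fin n) : ℝ :=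
  if ∃ μ', Good n Pm Pw μ' ∧ μ'⁻¹ j = i then 0 else (1 + rW n Pw j i) / (n + 2)

noncomputable def Udef (n : ℕ) (Pm Pw : Fin n → Fin n → ℝ) (i j : Fin n) : ℝ :=
  (aN n Pm Pw i j : ℝ) + ((aN n Pm Pw i j : ℝ) + hM n Pm Pw i j) / (4 * ((kN n Pm Pw : ℝ) + 1))

noncomputable def Vdef (n : ℕ) (Pm Pw : Fin n → Fin n → ℝ) (i j : Fin n) : ℝ :=
  (bN n Pm Pw i j : ℝ) + ((bN n Pm Pw i j : ℝ) + hW n Pm Pw j i) / (4 * ((kN n Pm Pw : ℝ) + 1))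

open Classical in
noncomputable def pN (n : ℕ) (Pm Pw : Fin n → Fin n → ℝ) (i j : Fin n) : ℕ :=
  ∑ μ' : Equiv.Perm (Fin n), if Good n Pm Pw μ' ∧ μ' i = j then 1 else 0

/-- Key counting identity: at the partners of an isolated stable matching the
two counts add to `k+1`. -/
lemma key_count (hPm : ∀ i, Function.Injective (Pm i))
    (hPw : ∀ j, Function.Injective (Pw j))
    {μ : Equiv.Perm (Fin n)} (hg : Good n Pm Pw μ) (i j : Fin n) :
    aN n Pm Pw i (μ i) + bN n Pm Pw (μ⁻¹ j) j = kN n Pm Pw + 1 := by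
  classical
  unfold aN bN kN
  rw [← Finset.sum_add_distrib]
  have hpt : ∀ μ' ∈ (Finset.univ : Finset (Equiv.Perm (Fin n))),
      ((if Good n Pm Pw μ' ∧ Pm i (μ' i) ≤ Pm i (μ i) then 1 else 0)
        + (if Good n Pm Pw μ' ∧ Pw j (μ'⁻¹ j) ≤ Pw j (μ⁻¹ j) then 1 else 0) : ℕ)
      = (if Good n Pm Pw μ' then 1 else 0) + (if μ' = μ then 1 else 0) := by
    intro μ' _
    by_cases hgood' : Good n Pm Pw μ'
    · by_cases he : μ' = μ
      · subst he
        rw [if_pos ⟨hgood', le_rfl⟩, if_pos ⟨hgood', le_rfl⟩, if_pos hgood', if_pos rfl]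
      · have hdi := hg.2 μ' hgood'.1 he
        rcases chain hPm hPw hg.1 hg.2 hgood'.1 he with hc | hc
        · have hwo : ∀ j', Pw j' (μ⁻¹ j') < Pw j' (μ'⁻¹ j') :=
            womenOpp hgood'.1 hPw hc hdi.2
          rw [if_pos ⟨hgood', le_of_lt (hc i)⟩,
            if_neg (fun hcon => absurd hcon.2 (not_le.2 (hwo j))),
            if_pos hgood', if_neg he]
        · have hd' : ∀ j', μ⁻¹ j' ≠ μ'⁻¹ j' := fun j' h => hdi.2 j' h.symm
          have hwo : ∀ j', Pw j' (μ'⁻¹ j') < Pw j' (μ⁻¹ j') :=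
            womenOpp hg.1 hPw hc hd'
          rw [if_neg (fun hcon => absurd hcon.2 (not_le.2 (hc i))),
            if_pos ⟨hgood', le_of_lt (hwo j)⟩, if_pos hgood', if_neg he]
    · have hne2 : μ' ≠ μ := fun h => hgood' (h ▸ hg)
      rw [if_neg (fun hcon => hgood' hcon.1), if_neg (fun hcon => hgood' hcon.1),
        if_neg hgood', if_neg hne2]
  rw [Finset.sum_congr rfl hpt, Finset.sum_add_distrib,
    Finset.sum_ite_eq' Finset.univ μ (fun _ => 1)]
  simp

lemma pair_bound (hPm : ∀ i, Function.Injective (Pm i))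
    (hPw : ∀ j, Function.Injective (Pw j)) (i j : Fin n) :
    aN n Pm Pw i j + bN n Pm Pw i j ≤ kN n Pm Pw + pN n Pm Pw i j := by
  classical
  unfold aN bN kN pN
  rw [← Finset.sum_add_distrib, ← Finset.sum_add_distrib]
  apply Finset.sum_le_sum
  intro μ' _
  by_cases hgood' : Good n Pm Pw μ'
  · by_cases hc1 : Pm i (μ' i) ≤ Pm i j <;> by_cases hc2 : Pw j (μ'⁻¹ j) ≤ Pw j i
    · -- both: must be the pair of μ'
      have hij : μ' i = j := by
        by_contra hij
        have hs1 : Pm i (μ' i) < Pm i j :=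
          lt_of_le_of_ne hc1 (fun he => hij (hPm i he))
        have hinvne : μ'⁻¹ j ≠ i := by
          intro he
          exact hij (by rw [← he, Equiv.Perm.apply_inv_self])
        have hs2 : Pw j (μ'⁻¹ j) < Pw j i :=
          lt_of_le_of_ne hc2 (fun he => hinvne (hPw j he))
        exact hgood'.1 ⟨i, j, hs1, hs2⟩
      rw [if_pos ⟨hgood', hc1⟩, if_pos ⟨hgood', hc2⟩, if_pos hgood', if_pos ⟨hgood', hij⟩]
    · rw [if_pos ⟨hgood', hc1⟩, if_neg (fun hcon => hc2 hcon.2), if_pos hgood']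
      omega
    · rw [if_neg (fun hcon => hc1 hcon.2), if_pos ⟨hgood', hc2⟩, if_pos hgood']
      omega
    · rw [if_neg (fun hcon => hc1 hcon.2), if_neg (fun hcon => hc2 hcon.2), if_pos hgood']
      omega
  · rw [if_neg (fun hcon => hgood' hcon.1), if_neg (fun hcon => hgood' hcon.1),
      if_neg hgood', if_neg (fun hcon => hgood' hcon.1)]

lemma pN_le_one (i j : Fin n) : pN n Pm Pw i j ≤ 1 := by
  classical
  unfold pN
  by_cases hex : ∃ μ'', Good n Pm Pw μ'' ∧ μ'' i = j
  · obtain ⟨w, hw⟩ := hex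
    calc (∑ μ' : Equiv.Perm (Fin n), if Good n Pm Pw μ' ∧ μ' i = j then 1 else 0)
        ≤ ∑ μ' : Equiv.Perm (Fin n), if μ' = w then 1 else 0 := by
          apply Finset.sum_le_sum
          intro μ' _
          by_cases hc : Good n Pm Pw μ' ∧ μ' i = j
          · rw [if_pos hc]
            have : μ' = w := by
              by_contra hne
              exact (hw.1.2 μ' hc.1.1 hne).1 i (hc.2.trans hw.2.symm)
            rw [if_pos this]
          · rw [if_neg hc]; omega
      _ ≤ 1 := by
          rw [Finset.sum_ite_eq' Finset.univ w (fun _ => 1)]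
          simp
  · have : ∀ μ' ∈ (Finset.univ : Finset (Equiv.Perm (Fin n))),
        (if Good n Pm Pw μ' ∧ μ' i = j then 1 else 0) = 0 := by
      intro μ' _
      exact if_neg (fun hc => hex ⟨μ', hc⟩)
    rw [Finset.sum_congr rfl this]
    simp

lemma pN_eq_zero (i j : Fin n) (hex : ¬∃ μ'', Good n Pm Pw μ'' ∧ μ'' i = j) :
    pN n Pm Pw i j = 0 := by
  classical
  unfold pN
  apply Finset.sum_eq_zero
  intro μ' _
  exact if_neg (fun hc => hex ⟨μ', hc⟩)

lemma aN_mono (i : Fin n) {j j' : Fin n} (h : Pm i j ≤ Pm i j') :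
    aN n Pm Pw i j ≤ aN n Pm Pw i j' := by
  classical
  apply Finset.sum_le_sum
  intro μ' _
  by_cases hc : Good n Pm Pw μ' ∧ Pm i (μ' i) ≤ Pm i j
  · rw [if_pos hc, if_pos ⟨hc.1, hc.2.trans h⟩]
  · rw [if_neg hc]; omega

lemma aN_strict (i : Fin n) {j j' : Fin n} (h : Pm i j < Pm i j')
    {w : Equiv.Perm (Fin n)} (hw1 : Good n Pm Pw w) (hw2 : w i = j') :
    aN n Pm Pw i j < aN n Pm Pw i j' := by
  classical
  apply Finset.sum_lt_sum
  · intro μ' _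
    by_cases hc : Good n Pm Pw μ' ∧ Pm i (μ' i) ≤ Pm i j
    · rw [if_pos hc, if_pos ⟨hc.1, hc.2.trans (le_of_lt h)⟩]
    · rw [if_neg hc]; omega
  · refine ⟨w, Finset.mem_univ w, ?_⟩
    rw [if_neg (fun hc => absurd (hw2 ▸ hc.2) (not_le.2 h)),
      if_pos ⟨hw1, by rw [hw2]⟩]
    omega

lemma bN_mono (j : Fin n) {i i' : Fin n} (h : Pw j i ≤ Pw j i') :
    bN n Pm Pw i j ≤ bN n Pm Pw i' j := by
  classical
  apply Finset.sum_le_sum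
  intro μ' _
  by_cases hc : Good n Pm Pw μ' ∧ Pw j (μ'⁻¹ j) ≤ Pw j i
  · rw [if_pos hc, if_pos ⟨hc.1, hc.2.trans h⟩]
  · rw [if_neg hc]; omega

lemma bN_strict (j : Fin n) {i i' : Fin n} (h : Pw j i < Pw j i')
    {w : Equiv.Perm (Fin n)} (hw1 : Good n Pm Pw w) (hw2 : w⁻¹ j = i') :
    bN n Pm Pw i j < bN n Pm Pw i' j := by
  classical
  apply Finset.sum_lt_sum
  · intro μ' _
    by_cases hc : Good n Pm Pw μ' ∧ Pw j (μ'⁻¹ j) ≤ Pw j i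
    · rw [if_pos hc, if_pos ⟨hc.1, hc.2.trans (le_of_lt h)⟩]
    · rw [if_neg hc]; omega
  · refine ⟨w, Finset.mem_univ w, ?_⟩
    rw [if_neg (fun hc => absurd (hw2 ▸ hc.2) (not_le.2 h)),
      if_pos ⟨hw1, by rw [hw2]⟩]
    omega

lemma rM_strict (i : Fin n) {j j' : Fin n} (h : Pm i j < Pm i j') :
    rM n Pm i j < rM n Pm i j' := by
  classical
  apply Finset.sum_lt_sum
  · intro x _
    by_cases hc : Pm i x < Pm i j
    · rw [if_pos hc, if_pos (hc.trans h)]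
    · rw [if_neg hc]; omega
  · exact ⟨j, Finset.mem_univ j, by rw [if_neg (lt_irrefl _), if_pos h]; omega⟩

lemma rW_strict (j : Fin n) {i i' : Fin n} (h : Pw j i < Pw j i') :
    rW n Pw j i < rW n Pw j i' := by
  classical
  apply Finset.sum_lt_sum
  · intro x _
    by_cases hc : Pw j x < Pw j i
    · rw [if_pos hc, if_pos (hc.trans h)]
    · rw [if_neg hc]; omega
  · exact ⟨i, Finset.mem_univ i, by rw [if_neg (lt_irrefl _), if_pos h]; omega⟩

lemma rM_le (i j : Fin n) : rM n Pm i j ≤ n := by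
  classical
  calc rM n Pm i j ≤ ∑ _x : Fin n, 1 := by
        apply Finset.sum_le_sum; intro x _; split_ifs <;> omega
    _ = n := by simp

lemma rW_le (j i : Fin n) : rW n Pw j i ≤ n := by
  classical
  calc rW n Pw j i ≤ ∑ _x : Fin n, 1 := by
        apply Finset.sum_le_sum; intro x _; split_ifs <;> omega
    _ = n := by simp

lemma hM_nonneg (i j : Fin n) : 0 ≤ hM n Pm Pw i j := by
  unfold hM; split_ifs
  · norm_num
  · positivity

lemma hM_le_one (i j : Fin n) : hM n Pm Pw i j ≤ 1 := by
  unfold hM; split_ifs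
  · norm_num
  · rw [div_le_one (by positivity)]
    have := rM_le (Pm := Pm) i j
    have : (rM n Pm i j : ℝ) ≤ n := by exact_mod_cast this
    linarith

lemma hW_nonneg (j i : Fin n) : 0 ≤ hW n Pm Pw j i := by
  unfold hW; split_ifs
  · norm_num
  · positivity

lemma hW_le_one (j i : Fin n) : hW n Pm Pw j i ≤ 1 := by
  unfold hW; split_ifs
  · norm_num
  · rw [div_le_one (by positivity)]
    have := rW_le (Pw := Pw) j i
    have : (rW n Pw j i : ℝ) ≤ n := by exact_mod_cast this
    linarith

lemma div_le_div_pos' {a b c : ℝ} (hc : 0 < c) (h : a ≤ b) : a / c ≤ b / c := by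
  exact (div_le_div_iff_of_pos_right hc).2 h

lemma div_lt_div_pos' {a b c : ℝ} (hc : 0 < c) (h : a < b) : a / c < b / c := by
  exact (div_lt_div_iff_of_pos_right hc).2 h

lemma U_lt (i : Fin n) {j j' : Fin n}
    (hlt : Pm i j < Pm i j') : Udef n Pm Pw i j < Udef n Pm Pw i j' := by
  classical
  have hD : (0:ℝ) < 4 * ((kN n Pm Pw : ℝ) + 1) := by positivity
  have hmono := aN_mono (Pm := Pm) (Pw := Pw) i (le_of_lt hlt)
  have hMj := hM_le_one (Pm := Pm) (Pw := Pw) (i := i) (j := j)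
  have hMj0 := hM_nonneg (Pm := Pm) (Pw := Pw) (i := i) (j := j)
  have hMj' := hM_le_one (Pm := Pm) (Pw := Pw) (i := i) (j := j')
  have hMj'0 := hM_nonneg (Pm := Pm) (Pw := Pw) (i := i) (j := j')
  unfold Udef
  rcases lt_or_eq_of_le hmono with hstrict | heq
  · have hca : (aN n Pm Pw i j : ℝ) + 1 ≤ (aN n Pm Pw i j' : ℝ) := by
      exact_mod_cast hstrict
    have hdiv := div_le_div_pos' hD
      (show (aN n Pm Pw i j : ℝ) + hM n Pm Pw i j
          ≤ (aN n Pm Pw i j' : ℝ) + hM n Pm Pw i j' by linarith)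
    linarith
  · have heqR : (aN n Pm Pw i j : ℝ) = (aN n Pm Pw i j' : ℝ) := by exact_mod_cast heq
    have hnp' : ¬∃ μ'', Good n Pm Pw μ'' ∧ μ'' i = j' := by
      rintro ⟨w, hw1, hw2⟩
      exact absurd heq (Nat.ne_of_lt (aN_strict i hlt hw1 hw2))
    have hresid : hM n Pm Pw i j < hM n Pm Pw i j' := by
      unfold hM
      rw [if_neg hnp']
      split_ifs with hp
      · positivity
      · have hr : (rM n Pm i j : ℝ) < (rM n Pm i j' : ℝ) := by
          exact_mod_cast rM_strict (Pm := Pm) i hlt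
        exact div_lt_div_pos' (by positivity) (by linarith)
    have hdiv := div_lt_div_pos' hD
      (show (aN n Pm Pw i j : ℝ) + hM n Pm Pw i j
          < (aN n Pm Pw i j' : ℝ) + hM n Pm Pw i j' by linarith)
    linarith

lemma V_lt (j : Fin n) {i i' : Fin n}
    (hlt : Pw j i < Pw j i') : Vdef n Pm Pw i j < Vdef n Pm Pw i' j := by
  classical
  have hD : (0:ℝ) < 4 * ((kN n Pm Pw : ℝ) + 1) := by positivity
  have hmono := bN_mono (Pm := Pm) (Pw := Pw) j (le_of_lt hlt)
  have hWj := hW_le_one (Pm := Pm) (Pw := Pw) (j := j) (i := i)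
  have hWj0 := hW_nonneg (Pm := Pm) (Pw := Pw) (j := j) (i := i)
  have hWj' := hW_le_one (Pm := Pm) (Pw := Pw) (j := j) (i := i')
  have hWj'0 := hW_nonneg (Pm := Pm) (Pw := Pw) (j := j) (i := i')
  unfold Vdef
  rcases lt_or_eq_of_le hmono with hstrict | heq
  · have hca : (bN n Pm Pw i j : ℝ) + 1 ≤ (bN n Pm Pw i' j : ℝ) := by
      exact_mod_cast hstrict
    have hdiv := div_le_div_pos' hD
      (show (bN n Pm Pw i j : ℝ) + hW n Pm Pw j i
          ≤ (bN n Pm Pw i' j : ℝ) + hW n Pm Pw j i' by linarith)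
    linarith
  · have heqR : (bN n Pm Pw i j : ℝ) = (bN n Pm Pw i' j : ℝ) := by exact_mod_cast heq
    have hnp' : ¬∃ μ'', Good n Pm Pw μ'' ∧ μ''⁻¹ j = i' := by
      rintro ⟨w, hw1, hw2⟩
      exact absurd heq (Nat.ne_of_lt (bN_strict j hlt hw1 hw2))
    have hresid : hW n Pm Pw j i < hW n Pm Pw j i' := by
      unfold hW
      rw [if_neg hnp']
      split_ifs with hp
      · positivity
      · have hr : (rW n Pw j i : ℝ) < (rW n Pw j i' : ℝ) := by
          exact_mod_cast rW_strict (Pw := Pw) j hlt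
        exact div_lt_div_pos' (by positivity) (by linarith)
    have hdiv := div_lt_div_pos' hD
      (show (bN n Pm Pw i j : ℝ) + hW n Pm Pw j i
          < (bN n Pm Pw i' j : ℝ) + hW n Pm Pw j i' by linarith)
    linarith

end Stmt16Aux


theorem stmt_16 (n : ℕ) (Pm Pw : Fin n → Fin n → ℝ)
    (hPm : ∀ i, Function.Injective (Pm i)) (hPw : ∀ j, Function.Injective (Pw j)) :
    ∃ U V : Fin n → Fin n → ℝ,
      (∀ i j j', U i j < U i j' ↔ Pm i j < Pm i j') ∧
      (∀ j i i', V i j < V i' j ↔ Pw j i < Pw j i') ∧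
      ∀ μ : Equiv.Perm (Fin n), OrdStable n Pm Pw μ → Isolated n Pm Pw μ →
        ∀ i j, U i j + V i j ≤ U i (μ i) + V (μ⁻¹ j) j := by
  classical
  open Stmt16Aux in
  refine ⟨Udef n Pm Pw, Vdef n Pm Pw, ?_, ?_, ?_⟩
  · intro i j j'
    constructor
    · intro h
      rcases lt_trichotomy (Pm i j) (Pm i j') with hc | hc | hc
      · exact hc
      · exact absurd h (by rw [hPm i hc]; exact lt_irrefl _)
      · exact absurd h (not_lt.2 (le_of_lt (U_lt (Pm := Pm) (Pw := Pw) i hc)))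
    · exact U_lt (Pm := Pm) (Pw := Pw) i
  · intro j i i'
    constructor
    · intro h
      rcases lt_trichotomy (Pw j i) (Pw j i') with hc | hc | hc
      · exact hc
      · exact absurd h (by rw [hPw j hc]; exact lt_irrefl _)
      · exact absurd h (not_lt.2 (le_of_lt (V_lt (Pm := Pm) (Pw := Pw) j hc)))
    · exact V_lt (Pm := Pm) (Pw := Pw) j
  · intro μ hs hiso i j
    have hgood : Good n Pm Pw μ := ⟨hs, hiso⟩
    have hD : (0:ℝ) < 4 * ((kN n Pm Pw : ℝ) + 1) := by positivity
    set k : ℝ := (kN n Pm Pw : ℝ) with hk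
    set D : ℝ := 4 * (k + 1) with hDdef
    have hkey : (aN n Pm Pw i (μ i) : ℝ) + (bN n Pm Pw (μ⁻¹ j) j : ℝ) = k + 1 := by
      have := key_count hPm hPw hgood i j
      rw [hk]
      exact_mod_cast this
    have hMz : hM n Pm Pw i (μ i) = 0 := by
      unfold hM
      exact if_pos ⟨μ, hgood, rfl⟩
    have hWz : hW n Pm Pw j (μ⁻¹ j) = 0 := by
      unfold hW
      exact if_pos ⟨μ, hgood, rfl⟩
    set A : ℝ := (aN n Pm Pw i (μ i) : ℝ) with hA
    set B : ℝ := (bN n Pm Pw (μ⁻¹ j) j : ℝ) with hB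
    set sa : ℝ := (aN n Pm Pw i j : ℝ) with hsa
    set sb : ℝ := (bN n Pm Pw i j : ℝ) with hsb
    have hA0 : 0 ≤ A := by rw [hA]; positivity
    have hB0 : 0 ≤ B := by rw [hB]; positivity
    have hk0 : 0 ≤ k := by rw [hk]; positivity
    have hRHS : Udef n Pm Pw i (μ i) + Vdef n Pm Pw (μ⁻¹ j) j
        = (k + 1) + (k + 1) / D := by
      unfold Udef Vdef
      rw [hMz, hWz, ← hA, ← hB, ← hk, ← hDdef, add_zero, add_zero]
      rw [show A + A / D + (B + B / D) = (A + B) + (A / D + B / D) by ring,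
        ← add_div, hkey]
    rw [hRHS]
    have hLHS : Udef n Pm Pw i j + Vdef n Pm Pw i j
        = (sa + sb) + (sa + hM n Pm Pw i j + (sb + hW n Pm Pw j i)) / D := by
      unfold Udef Vdef
      rw [← hsa, ← hsb, ← hk, ← hDdef, add_div]
      ring
    rw [hLHS]
    by_cases hex : ∃ μ'', Good n Pm Pw μ'' ∧ μ'' i = j
    · -- (i,j) is a pair of an isolated stable matching
      obtain ⟨w, hw1, hw2⟩ := hex
      have hMz2 : hM n Pm Pw i j = 0 := by
        unfold hM; exact if_pos ⟨w, hw1, hw2⟩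
      have hWz2 : hW n Pm Pw j i = 0 := by
        unfold hW
        refine if_pos ⟨w, hw1, ?_⟩
        rw [← hw2, Equiv.Perm.inv_apply_self]
      have hbound : sa + sb ≤ k + 1 := by
        have h1 := pair_bound hPm hPw (Pm := Pm) (Pw := Pw) i j
        have h2 := pN_le_one (Pm := Pm) (Pw := Pw) (i := i) (j := j)
        have : aN n Pm Pw i j + bN n Pm Pw i j ≤ kN n Pm Pw + 1 := by omega
        rw [hsa, hsb, hk]
        exact_mod_cast this
      rw [hMz2, hWz2, add_zero, add_zero]
      have hdiv := div_le_div_pos' hD (show sa + sb ≤ k + 1 from hbound)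
      linarith
    · -- no isolated stable matching pairs i and j
      have hbound : sa + sb ≤ k := by
        have h1 := pair_bound hPm hPw (Pm := Pm) (Pw := Pw) i j
        have h2 := pN_eq_zero (Pm := Pm) (Pw := Pw) i j hex
        have : aN n Pm Pw i j + bN n Pm Pw i j ≤ kN n Pm Pw := by omega
        rw [hsa, hsb, hk]
        exact_mod_cast this
      have hM1 := hM_le_one (Pm := Pm) (Pw := Pw) (i := i) (j := j)
      have hM0 := hM_nonneg (Pm := Pm) (Pw := Pw) (i := i) (j := j)
      have hW1 := hW_le_one (Pm := Pm) (Pw := Pw) (j := j) (i := i)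
      have hW0 := hW_nonneg (Pm := Pm) (Pw := Pw) (j := j) (i := i)
      have hnum : sa + hM n Pm Pw i j + (sb + hW n Pm Pw j i) ≤ k + 2 := by linarith
      have hdiv := div_le_div_pos' hD hnum
      have hsmall : (k + 2) / D ≤ 1 := by
        rw [div_le_one hD, hDdef]
        linarith
      have hpos : 0 ≤ (k + 1) / D := div_nonneg (by linarith) hD.le
      linarith
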